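/- Let F/K be a finite extension of function fields over F_q of degree n, and suppose there is a rational place Q of K with a unique place Q' of F above it. Let D be a positive divisor of F with Q' not in its support and deg(D) < n. Then f_1, ..., f_s ∈ L(D) are linearly independent over F_q if and only if they are linearly independent over K. -/

import Mathlib

theorem AddValuation.ne_top_of_ne_zero' {F : Type*} [Field F]
    (v : AddValuation F (WithTop ℤ)) {x : F} (hx : x ≠ 0) : v x ≠ ⊤ := by
  intro h
  have h1 : v (x * x⁻¹) = v x + v x⁻¹ := v.map_mul x x⁻¹
  rw [mul_inv_cancel₀ hx, v.map_one, h, top_add] at h1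
  exact (by simp at h1)

theorem one_le_of_pos_withTop {a : WithTop ℤ} (ha : 0 < a) : (1 : WithTop ℤ) ≤ a := by
  cases a with
  | top => exact le_top
  | coe k => exact_mod_cast (by exact_mod_cast ha : (0:ℤ) < k)

/-- Lemma 3.2.  Let `F/K` be a degree-`n` extension of function
fields over `F_q`, with a rational place `Q` of `K` having a unique place `Q'` of `F`
above it (so `e(Q'|Q)·deg Q' = n`).  Let `D` be a positive divisor of `F` with
`Q' ∉ supp D` and `deg D < n`.  Then `f_1, …, f_s ∈ L(D)` are linearly independent
over `F_q` iff they are linearly independent over `K`.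
Places are modelled as additive valuations `F → ℤ ∪ {∞}`; the function-field structure
is encoded by: constants have valuation `0`, every nonzero function has finitely many
zeros and poles, and its divisor has degree `0`. -/
theorem linearIndependent_iff_of_unique_place_above
    (Fq K F : Type*) [Field Fq] [Fintype Fq] [Field K] [Field F]
    [Algebra Fq K] [Algebra Fq F] [Algebra K F] [IsScalarTower Fq K F]
    [FiniteDimensional K F]
    -- the places of F, with degrees
    (PlaceF : Type*) (v : PlaceF → AddValuation F (WithTop ℤ))
    (degF : PlaceF → ℕ) (hdegF : ∀ P, 0 < degF P)
    (hconst : ∀ P, ∀ c : Fq, c ≠ 0 → v P (algebraMap Fq F c) = 0)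
    (hfin : ∀ g : F, g ≠ 0 → {P | v P g ≠ 0}.Finite)
    (hdeg0 : ∀ g : F, g ≠ 0 → ∑ᶠ P, (WithTop.untopD 0 (v P g)) * (degF P : ℤ) = 0)
    -- the rational place Q of K
    (vQ : AddValuation K (WithTop ℤ))
    (hconstK : ∀ c : Fq, c ≠ 0 → vQ (algebraMap Fq K c) = 0)
    (hQrat : ∀ x : K, vQ x = 0 → ∃ c : Fq, 0 < vQ (x - algebraMap Fq K c))
    -- `Q'` is the unique place of `F` above `Q`, with ramification index `e`
    (Q' : PlaceF) (e : ℕ) (he : 0 < e)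
    (hlie : ∀ x : K, v Q' (algebraMap K F x) = e • vQ x)
    (huniq : ∀ P : PlaceF,
      (∀ x : K, 0 < vQ x → 0 < v P (algebraMap K F x)) → P = Q')
    (hfund : e * degF Q' = Module.finrank K F)
    -- the positive divisor `D` with `Q' ∉ supp D` and `deg D < n`
    (D : PlaceF →₀ ℤ) (hDpos : ∀ P, 0 ≤ D P) (hQ'supp : D Q' = 0)
    (hdegD : (D.sum fun P k => k * (degF P : ℤ)) < (Module.finrank K F : ℤ))
    (s : ℕ) (f : Fin s → F)
    (hfLD : ∀ i, ∀ P, (-(D P) : WithTop ℤ) ≤ v P (f i)) :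
    LinearIndependent Fq f ↔ LinearIndependent K f := by
  classical
  constructor
  case mpr =>
    intro h
    refine h.restrict_scalars ?_
    intro a b hab
    apply (algebraMap Fq K).injective
    simpa [Algebra.algebraMap_eq_smul_one] using hab
  intro hFq
  by_contra hK
  obtain ⟨x, hxsum, j0, hj0⟩ := Fintype.not_linearIndependent_iff.mp hK
  -- pick j with vQ (x j) minimal
  obtain ⟨j, -, hjmin⟩ :=
    Finset.exists_min_image Finset.univ (fun i => vQ (x i)) ⟨j0, Finset.mem_univ _⟩
  have hjmin : ∀ i, vQ (x j) ≤ vQ (x i) := fun i => hjmin i (Finset.mem_univ i)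
  have hxj : x j ≠ 0 := by
    intro h
    have := hjmin j0
    rw [h, (vQ : AddValuation K (WithTop ℤ)).map_zero] at this
    exact vQ.ne_top_of_ne_zero' hj0 (top_le_iff.mp this)
  have hvxj : vQ (x j) ≠ ⊤ := vQ.ne_top_of_ne_zero' hxj
  set x' : Fin s → K := fun i => x i / x j with hx'def
  have hx'j : x' j = 1 := div_self hxj
  have hx'sum : ∑ i, x' i • f i = 0 := by
    have : ∑ i, x' i • f i = (x j)⁻¹ • ∑ i, x i • f i := by
      rw [Finset.smul_sum]
      refine Finset.sum_congr rfl fun i _ => ?_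
      rw [smul_smul, hx'def]
      congr 1
      field_simp
    rw [this, hxsum, smul_zero]
  have hx'nonneg : ∀ i, 0 ≤ vQ (x' i) := by
    intro i
    have hxi : x i = x' i * x j := by
      rw [hx'def]
      exact (div_mul_cancel₀ _ hxj).symm
    have h1 : vQ (x j) ≤ vQ (x' i) + vQ (x j) := by
      rw [← vQ.map_mul, ← hxi]; exact hjmin i
    have h2 : 0 + vQ (x j) ≤ vQ (x' i) + vQ (x j) := by rwa [zero_add]
    exact (WithTop.add_le_add_iff_right hvxj).mp h2
  -- approximate by constants
  have hc : ∀ i, ∃ c : Fq, 0 < vQ (x' i - algebraMap Fq K c) := by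
    intro i
    rcases eq_or_lt_of_le (hx'nonneg i) with h | h
    · exact hQrat _ h.symm
    · exact ⟨0, by rwa [map_zero, sub_zero]⟩
  choose c hcpos using hc
  set y : Fin s → K := fun i => x' i - algebraMap Fq K (c i) with hydef
  have hcj : c j ≠ 0 := by
    intro h
    have := hcpos j
    rw [h, map_zero, sub_zero, hx'j, vQ.map_one] at this
    exact lt_irrefl _ this
  set g : F := ∑ i, (c i) • f i with hgdef
  have hg0 : g ≠ 0 := by
    intro h
    exact hcj (Fintype.linearIndependent_iff.mp hFq c h j)
  have hkey : g = - ∑ i, algebraMap K F (y i) * f i := by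
    have h1 : ∀ i, x' i • f i = (c i) • f i + algebraMap K F (y i) * f i := by
      intro i
      have : x' i = algebraMap Fq K (c i) + y i := by rw [hydef]; ring
      rw [this, add_smul]
      congr 1
      · exact algebraMap_smul K (c i) (f i)
      · exact Algebra.smul_def _ _
    have h2 : (0:F) = g + ∑ i, algebraMap K F (y i) * f i := by
      rw [← hx'sum, hgdef, ← Finset.sum_add_distrib]
      exact Finset.sum_congr rfl fun i _ => h1 i
    linear_combination -h2
  -- valuation bounds
  have hgQ' : (e : WithTop ℤ) ≤ v Q' g := by
    rw [hkey, (v Q').map_neg]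
    refine (v Q').map_le_sum fun i _ => ?_
    rw [(v Q').map_mul, hlie]
    have hy1 : (1 : WithTop ℤ) ≤ vQ (y i) := one_le_of_pos_withTop (hcpos i)
    have hsm : (e : WithTop ℤ) ≤ e • vQ (y i) := by
      calc (e : WithTop ℤ) = e • (1 : WithTop ℤ) := by simp
        _ ≤ e • vQ (y i) := nsmul_le_nsmul_right hy1 e
    have hf' : (0 : WithTop ℤ) ≤ v Q' (f i) := by
      have := hfLD i Q'
      rw [hQ'supp] at this
      simpa using this
    calc (e : WithTop ℤ) = (e : WithTop ℤ) + 0 := by rw [add_zero]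
      _ ≤ e • vQ (y i) + v Q' (f i) := add_le_add hsm hf'
  have hgD : ∀ P, (-(D P) : WithTop ℤ) ≤ v P g := by
    intro P
    rw [hgdef]
    refine (v P).map_le_sum fun i _ => ?_
    rcases eq_or_ne (c i) 0 with h | h
    · rw [h, zero_smul, (v P).map_zero]; exact le_top
    · rw [Algebra.smul_def, (v P).map_mul, hconst P _ h, zero_add]
      exact hfLD i P
  -- the degree computation
  set T : Finset PlaceF := ((hfin g hg0).toFinset ∪ D.support) ∪ {Q'} with hTdef
  have hQ'T : Q' ∈ T := by simp [hTdef]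
  have hsuppT : Function.support (fun P => (WithTop.untopD 0 (v P g)) * (degF P : ℤ)) ⊆ ↑T := by
    intro P hP
    have : WithTop.untopD 0 (v P g) ≠ 0 := by
      intro h; apply hP; simp [h]
    have hvP : v P g ≠ 0 := by
      intro h; apply this; rw [h]; rfl
    simp only [hTdef, Finset.coe_union, Set.mem_union]
    left; left
    simpa using (hfin g hg0).mem_toFinset.mpr hvP
  have heq : ∑ P ∈ T, (WithTop.untopD 0 (v P g)) * (degF P : ℤ) = 0 := by
    rw [← finsum_eq_sum_of_support_subset _ hsuppT]
    exact hdeg0 g hg0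
  set lower : PlaceF → ℤ := fun P => if P = Q' then (e * degF Q' : ℤ) else -(D P) * degF P
    with hlowdef
  have hterm : ∀ P ∈ T, lower P ≤ (WithTop.untopD 0 (v P g)) * (degF P : ℤ) := by
    intro P _
    obtain ⟨k, hk⟩ : ∃ k : ℤ, v P g = (k : WithTop ℤ) := by
      have := (v P).ne_top_of_ne_zero' hg0
      cases h : v P g with
      | top => exact absurd h this
      | coe k => exact ⟨k, rfl⟩
    have huk : WithTop.untopD 0 (v P g) = k := by rw [hk]; simp
    rw [huk, hlowdef]
    by_cases hP : P = Q'
    · subst hP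
      simp only [if_pos rfl]
      have : (e : ℤ) ≤ k := by
        have := hgQ'; rw [hk] at this; exact_mod_cast this
      exact mul_le_mul_of_nonneg_right this (Int.natCast_nonneg _)
    · simp only [if_neg hP]
      have : -(D P) ≤ k := by
        have := hgD P; rw [hk] at this; exact_mod_cast this
      exact mul_le_mul_of_nonneg_right this (Int.natCast_nonneg _)
  have hsumlow : ∑ P ∈ T, lower P ≤ 0 := heq ▸ Finset.sum_le_sum hterm
  have hDsub : D.support ⊆ T.erase Q' := by
    intro P hP
    have hPne : P ≠ Q' := by
      intro h; subst h; exact (Finsupp.mem_support_iff.mp hP) hQ'supp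
    refine Finset.mem_erase.mpr ⟨hPne, ?_⟩
    simp [hTdef, Finsupp.mem_support_iff.mp hP]
  have hsplit : ∑ P ∈ T, lower P
      = (e * degF Q' : ℤ) + ∑ P ∈ T.erase Q', (-(D P) * degF P) := by
    rw [← Finset.add_sum_erase _ _ hQ'T]
    congr 1
    · simp [hlowdef]
    · refine Finset.sum_congr rfl fun P hP => ?_
      simp [hlowdef, (Finset.mem_erase.mp hP).1]
  have hDsum : ∑ P ∈ T.erase Q', (-(D P) * (degF P : ℤ))
      = -(D.sum fun P k => k * (degF P : ℤ)) := by
    rw [Finsupp.sum]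
    rw [show (∑ P ∈ T.erase Q', -(D P) * (degF P : ℤ))
        = -∑ P ∈ T.erase Q', D P * (degF P : ℤ) by
      rw [← Finset.sum_neg_distrib]
      exact Finset.sum_congr rfl fun P _ => by ring]
    congr 1
    exact (Finset.sum_subset hDsub (fun P _ hP => by
      simp [Finsupp.notMem_support_iff.mp hP])).symm
  rw [hsplit, hDsum] at hsumlow
  have hfundZ : (e : ℤ) * (degF Q' : ℤ) = (Module.finrank K F : ℤ) := by
    exact_mod_cast hfund
  rw [hfundZ] at hsumlow
  linarith [hdegD, hsumlow]
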